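/- Let d, k, l > 0 with l² > d² + k², and set G = (d+l)² + k², H = (d−l)² + k², I = l² − d² − k² (> 0). Then the equality 2d(√(d² + k²) − d)/k² = I·(√(G·H) − I)/(2k²l²) holds if and only if k² + d² + 2dl − l² = 0, equivalently if and only if (l+d)² + k² = 2l². (The left-hand side is 1 − b²/a² for the unique minimal-eccentricity ellipse circumscribed about the parallelogram D with vertices O=(0,0), P=(l,0), Q=(d,k), R=(l+d,k), and the right-hand side is 1 − b²/a² for the unique minimal-eccentricity ellipse inscribed in D; so this says D is bielliptic if and only if the square of the length of the diagonal OR equals twice the square of the length of the side OP.) -/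

import Mathlib

theorem stmt_17 (d k l : ℝ) (hd : 0 < d) (hk : 0 < k) (hl : 0 < l)
    (hlt : d ^ 2 + k ^ 2 < l ^ 2)
    (G H I : ℝ)
    (hG : G = (d + l) ^ 2 + k ^ 2) (hH : H = (d - l) ^ 2 + k ^ 2)
    (hI : I = l ^ 2 - d ^ 2 - k ^ 2) :
    (2 * d * (Real.sqrt (d ^ 2 + k ^ 2) - d) / k ^ 2 =
        I * (Real.sqrt (G * H) - I) / (2 * k ^ 2 * l ^ 2) ↔
      k ^ 2 + d ^ 2 + 2 * d * l - l ^ 2 = 0) ∧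
    (k ^ 2 + d ^ 2 + 2 * d * l - l ^ 2 = 0 ↔ (l + d) ^ 2 + k ^ 2 = 2 * l ^ 2) := by
  set s := Real.sqrt (d ^ 2 + k ^ 2) with hsdef
  have hs2 : s ^ 2 = d ^ 2 + k ^ 2 := Real.sq_sqrt (by positivity)
  have hsnn : 0 ≤ s := Real.sqrt_nonneg _
  have hds : d < s := by nlinarith
  have hGH : G * H = I ^ 2 + 4 * k ^ 2 * l ^ 2 := by subst hG hH hI; ring
  have hGHnn : 0 ≤ G * H := by nlinarith [sq_nonneg I, sq_nonneg (k*l)]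
  set t := Real.sqrt (G * H) with htdef
  have ht2 : t ^ 2 = I ^ 2 + 4 * k ^ 2 * l ^ 2 := by
    rw [htdef, Real.sq_sqrt hGHnn, hGH]
  have htnn : 0 ≤ t := Real.sqrt_nonneg _
  have hIpos : 0 < I := by rw [hI]; linarith
  have hk2 : (0:ℝ) < k ^ 2 := by positivity
  have h2kl : (0:ℝ) < 2 * k ^ 2 * l ^ 2 := by positivity
  have hk2eq : k ^ 2 = s ^ 2 - d ^ 2 := by linarith
  constructor
  · constructor
    · intro h
      have h' : 2 * d * (s - d) * (2 * k ^ 2 * l ^ 2) = I * (t - I) * k ^ 2 :=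
        (div_eq_div_iff hk2.ne' h2kl.ne').mp h
      have hA : I * t = 4 * d * l ^ 2 * (s - d) + I ^ 2 := by
        have hcan : k ^ 2 * (I * t) = k ^ 2 * (4 * d * l ^ 2 * (s - d) + I ^ 2) := by
          linear_combination -h'
        exact mul_left_cancel₀ hk2.ne' hcan
      have hE2 : (4 * d * l ^ 2 * (s - d) + I ^ 2) ^ 2 = I ^ 2 * (I ^ 2 + 4 * k ^ 2 * l ^ 2) := by
        rw [← hA, mul_pow, ht2]
      have hE : (4 * l ^ 2 * (s - d) ^ 2) * (4 * d ^ 2 * l ^ 2 - I ^ 2) = 0 := by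
        linear_combination hE2 + 4 * I ^ 2 * l ^ 2 * hk2eq
      have hfac : 4 * d ^ 2 * l ^ 2 - I ^ 2 = 0 := by
        rcases mul_eq_zero.mp hE with h0 | h0
        · exfalso
          have : (0:ℝ) < 4 * l ^ 2 * (s - d) ^ 2 := by
            have : (0:ℝ) < s - d := by linarith
            positivity
          linarith
        · exact h0
      have hfac2 : (2 * d * l - I) * (2 * d * l + I) = 0 := by linear_combination hfac
      rcases mul_eq_zero.mp hfac2 with h0 | h0
      · rw [hI] at h0; linarith
      · exfalso; nlinarith [mul_pos hd hl]
    · intro hcond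
      have hIval : I = 2 * d * l := by rw [hI]; linarith
      have htval : t = 2 * l * s := by
        have h1 : (t - 2 * l * s) * (t + 2 * l * s) = 0 := by
          linear_combination ht2 + 4 * l ^ 2 * hk2eq + (I + 2 * d * l) * hIval
        rcases mul_eq_zero.mp h1 with h0 | h0
        · linarith
        · exfalso
          have hspos : 0 < s := lt_trans hd hds
          nlinarith [mul_pos hl hspos]
      rw [htval, hIval]
      field_simp
  · constructor <;> intro h <;> linear_combination h
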